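/- Fix e ≥ 3. For any partition ν = (ν_1,...,ν_M) of d, the degree of the row-reading standard tableau T^ν equals Σ_{x=1}^{M} ⌊ν_x / e⌋, where the degree of a standard tableau is defined recursively by deg(∅) = 0 and deg(T) = d_A(ν) + deg(T_{<d}) with A the node containing d, T_{<d} the tableau with d removed, and d_A(ν) = (# addable nodes of ν of the same residue as A strictly below A) − (# removable nodes of ν of the same residue as A strictly below A). -/

import Mathlib

/- A partition is encoded as its list of parts `L` (weakly decreasing, positive),
with `L.getD r 0` the length of (0-indexed) row `r`. -/

/-- Rows at which a node may be added to the partition `L`. -/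
def addableRows (L : List ℕ) : Finset ℕ :=
  (Finset.range (L.length + 1)).filter fun r => r = 0 ∨ L.getD r 0 < L.getD (r - 1) 0

/-- Rows at which a node may be removed from the partition `L`. -/
def removableRows (L : List ℕ) : Finset ℕ :=
  (Finset.range L.length).filter fun r => L.getD (r + 1) 0 < L.getD r 0

/-- Residue `(b - a) mod e` of the addable node in row `r` (at column `L.getD r 0`). -/
def addRes (e : ℕ) (L : List ℕ) (r : ℕ) : ZMod e :=
  (L.getD r 0 : ZMod e) - (r : ZMod e)

/-- Residue `(b - a) mod e` of the removable node in row `r` (at column `L.getD r 0 - 1`). -/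
def remRes (e : ℕ) (L : List ℕ) (r : ℕ) : ZMod e :=
  (L.getD r 0 : ZMod e) - 1 - (r : ZMod e)

/-- `d_A(ν)`: for the removable node `A` at the end of row `x`, the number of
addable nodes of the same residue strictly below `A` minus the number of
removable nodes of the same residue strictly below `A`. -/
def dACount (e : ℕ) (L : List ℕ) (x : ℕ) : ℤ :=
  (((addableRows L).filter fun r => x < r ∧ addRes e L r = remRes e L x).card : ℤ) -
  (((removableRows L).filter fun r => x < r ∧ remRes e L r = remRes e L x).card : ℤ)

/-- Remove the last node (in row-reading order) of the partition `L`: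
this is the node containing `d` in the row-reading tableau `T^ν`. -/
def shrink (L : List ℕ) : List ℕ :=
  if L.getLast! ≤ 1 then L.dropLast else L.dropLast ++ [L.getLast! - 1]

/-- The degree recursion for the row-reading tableau, with explicit fuel. -/
def degTAux (e : ℕ) : ℕ → List ℕ → ℤ
  | 0, _ => 0
  | _ + 1, [] => 0
  | n + 1, L => dACount e L (L.length - 1) + degTAux e n (shrink L)

/-- The degree of the row-reading standard tableau `T^ν`, computed by the
recursion `deg(T) = d_A(ν) + deg(T_{<d})` where `A` is the node containing `d`. -/
def degT (e : ℕ) (L : List ℕ) : ℤ := degTAux e (L.sum + L.length) L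



lemma getLast!_concat' (a : ℕ) (M : List ℕ) : (M ++ [a]).getLast! = a := by
  cases M with
  | nil => rfl
  | cons b t => simp [List.getLast!]

lemma getD_concat_self (a : ℕ) (M : List ℕ) : (M ++ [a]).getD M.length 0 = a := by
  rw [List.getD_eq_getElem _ _ (by simp)]
  simp

lemma getD_concat_big (a : ℕ) (M : List ℕ) {r : ℕ} (h : M.length + 1 ≤ r) :
    (M ++ [a]).getD r 0 = 0 := by
  apply List.getD_eq_default
  simpa using h

lemma degTAux_succ (e n : ℕ) (L : List ℕ) (h : L ≠ []) :
    degTAux e (n + 1) L = dACount e L (L.length - 1) + degTAux e n (shrink L) := by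
  cases L with
  | nil => exact absurd rfl h
  | cons b t => rfl

lemma dACount_last (e a : ℕ) (he : 3 ≤ e) (M : List ℕ) (ha : 0 < a) :
    dACount e (M ++ [a]) ((M ++ [a]).length - 1) = if e ∣ a then 1 else 0 := by
  haveI : NeZero e := ⟨by omega⟩
  have hlen : (M ++ [a]).length = M.length + 1 := by simp
  have h1 : ((removableRows (M ++ [a])).filter fun r =>
      (M ++ [a]).length - 1 < r ∧ remRes e (M ++ [a]) r = remRes e (M ++ [a]) ((M ++ [a]).length - 1)) = ∅ := by
    ext r
    simp only [removableRows, Finset.mem_filter, Finset.mem_range, hlen, Finset.notMem_empty,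
      iff_false]
    rintro ⟨⟨hr, -⟩, hr2, -⟩
    omega
  have h2 : ((addableRows (M ++ [a])).filter fun r =>
      (M ++ [a]).length - 1 < r ∧ addRes e (M ++ [a]) r = remRes e (M ++ [a]) ((M ++ [a]).length - 1)) =
      if e ∣ a then {M.length + 1} else ∅ := by
    have hres : (addRes e (M ++ [a]) (M.length + 1) = remRes e (M ++ [a]) M.length) ↔ e ∣ a := by
      rw [addRes, remRes, getD_concat_big a M le_rfl, getD_concat_self]
      rw [← ZMod.natCast_eq_zero_iff a e]
      push_cast
      constructor
      · intro h
        linear_combination -h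
      · intro h
        linear_combination -h
    ext r
    simp only [addableRows, Finset.mem_filter, Finset.mem_range, hlen]
    constructor
    · rintro ⟨⟨hr, -⟩, hr2, hr3⟩
      have : r = M.length + 1 := by omega
      subst this
      rw [Nat.add_sub_cancel] at hr3
      rw [hres] at hr3
      simp [hr3]
    · intro hr
      by_cases hdvd : e ∣ a
      · simp only [hdvd, if_true, Finset.mem_singleton] at hr
        subst hr
        refine ⟨⟨by omega, Or.inr ?_⟩, by omega, by rwa [Nat.add_sub_cancel, hres]⟩
        rw [getD_concat_big a M le_rfl, Nat.add_sub_cancel, getD_concat_self]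
        exact ha
      · simp [hdvd] at hr
  rw [dACount, h1, h2]
  split <;> simp

lemma shrink_one (M : List ℕ) : shrink (M ++ [1]) = M := by
  simp [shrink, getLast!_concat']

lemma shrink_big (a : ℕ) (ha : 2 ≤ a) (M : List ℕ) : shrink (M ++ [a]) = M ++ [a - 1] := by
  simp [shrink, getLast!_concat']
  omega

lemma main_lemma (e : ℕ) (he : 3 ≤ e) : ∀ n L, L.sum + L.length ≤ n →
    (∀ x ∈ L, 0 < x) → L.Pairwise (· ≥ ·) →
    degTAux e n L = ((L.map fun x => x / e).sum : ℕ) := by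
  intro n
  induction n with
  | zero =>
    intro L h _ _
    have : L = [] := by
      cases L with
      | nil => rfl
      | cons b t => simp at h
    subst this
    rfl
  | succ m ih =>
    intro L h hpos hsort
    rcases List.eq_nil_or_concat L with rfl | ⟨M, a, rfl⟩
    · rfl
    simp only [List.concat_eq_append] at h hpos hsort ⊢
    have hne : M ++ [a] ≠ [] := by simp
    have ha : 0 < a := hpos a (by simp)
    have hMpos : ∀ x ∈ M, 0 < x := fun x hx => hpos x (by simp [hx])
    have hMsort : M.Pairwise (· ≥ ·) := hsort.sublist (List.sublist_append_left M [a])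
    have hMa : ∀ x ∈ M, a ≤ x := by
      intro x hx
      have := (List.pairwise_append.mp hsort).2.2 x hx a (by simp)
      exact this
    rw [degTAux_succ e m _ hne, dACount_last e a he M ha]
    have hsum : (M ++ [a]).sum = M.sum + a := by simp
    have hlen : (M ++ [a]).length = M.length + 1 := by simp
    by_cases h1 : a = 1
    · subst h1
      rw [shrink_one, ih M (by rw [hsum, hlen] at h; omega) hMpos hMsort]
      have : ¬ e ∣ 1 := by
        intro h
        have := Nat.le_of_dvd one_pos h
        omega
      simp [this, Nat.div_eq_of_lt (show 1 < e by omega)]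
    · have ha2 : 2 ≤ a := by omega
      rw [shrink_big a ha2]
      have hpos' : ∀ x ∈ M ++ [a - 1], 0 < x := by
        intro x hx
        simp at hx
        rcases hx with hx | rfl
        · exact hMpos x hx
        · omega
      have hsort' : (M ++ [a - 1]).Pairwise (· ≥ ·) := by
        rw [List.pairwise_append]
        refine ⟨hMsort, by simp, ?_⟩
        intro x hx y hy
        simp at hy
        subst hy
        have := hMa x hx
        omega
      rw [ih (M ++ [a - 1]) (by simp at h ⊢; omega) hpos' hsort']
      have key : a / e = (a - 1) / e + if e ∣ a then 1 else 0 := by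
        conv_lhs => rw [show a = (a - 1) + 1 by omega]
        rw [Nat.succ_div, show a - 1 + 1 = a by omega]
      simp only [List.map_append, List.sum_append, List.map_cons, List.map_nil,
        List.sum_cons, List.sum_nil, add_zero]
      rw [key]
      push_cast
      split <;> push_cast <;> ring

/-- The degree of the row-reading standard tableau `T^ν` equals
`Σ_x ⌊ν_x / e⌋`. -/
theorem degT_row_reading (e d : ℕ) (he : 3 ≤ e) (L : List ℕ) (hd : L.sum = d)
    (hpos : ∀ x ∈ L, 0 < x) (hsort : L.Pairwise (· ≥ ·)) :
    degT e L = ((L.map fun x => x / e).sum : ℕ) := by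
  exact main_lemma e he _ L le_rfl hpos hsort
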